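/- Let ω ∈ ℝ be irrational. There exists a sequence (β_k)_{k≥1} of real numbers such that, setting α_k = β_1 + ⋯ + β_k, for every positive integer τ the sequence (α_k + kτω mod 1)_{k≥1} is not uniformly distributed in ℝ/ℤ; in fact, for every positive integer τ the set of indices k with α_k + kτω ∈ ℤ has positive lower density in ℕ. -/

import Mathlib

open MeasureTheory Filter
open scoped Classical

noncomputable def myA (ω : ℝ) (k : ℕ) : ℝ := -((k:ℝ) * ((padicValNat 2 k : ℝ) + 1) * ω)
noncomputable def myB (ω : ℝ) (k : ℕ) : ℝ := myA ω k - myA ω (k-1)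

lemma sum_myB (ω : ℝ) (k : ℕ) : ∑ j ∈ Finset.Icc 1 k, myB ω j = myA ω k := by
  induction k with
  | zero => simp [myA]
  | succ n ih =>
    rw [Finset.sum_Icc_succ_top (Nat.succ_le_succ (Nat.zero_le _)), ih]
    simp [myB]

lemma count_padic (t N : ℕ) :
    N / 2^(t+1) ≤ ((Finset.Icc 1 N).filter (fun k => padicValNat 2 k = t)).card := by
  classical
  rw [← Finset.card_range (N / 2^(t+1))]
  apply Finset.card_le_card_of_injOn (fun j => 2^t * (2*j+1))
  · intro j hj
    simp only [Finset.mem_coe, Finset.mem_range] at hj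
    simp only [Finset.mem_coe, Finset.mem_filter, Finset.mem_Icc]
    refine ⟨⟨Nat.one_le_iff_ne_zero.mpr (by positivity), ?_⟩, ?_⟩
    · have hJ : (N / 2^(t+1)) * 2^(t+1) ≤ N := Nat.div_mul_le_self _ _
      have h1 : 2^t * (2*j+1) < 2^t * (2*(j+1)) :=
        Nat.mul_lt_mul_of_le_of_lt (le_refl _) (by omega) (by positivity)
      have h2 : 2^t * (2*(j+1)) ≤ 2^t * (2*(N / 2^(t+1))) := by
        apply Nat.mul_le_mul_left; omega
      have h3 : 2^t * (2*(N / 2^(t+1))) = (N / 2^(t+1)) * 2^(t+1) := by ring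
      omega
    · rw [padicValNat.mul (by positivity) (by omega), padicValNat.prime_pow,
        padicValNat.eq_zero_of_not_dvd (by omega)]
      omega
  · intro i _ j _ h
    have := Nat.eq_of_mul_eq_mul_left (show 0 < 2^t by positivity) h
    omega


/-- cyclic subgroups of the circle are kick unstable: for any irrational `ω`
there is a sequence of kicks `β_k` (with partial sums `α_k`) such that for every positive
integer period `τ` the orbit `α_k + kτω (mod 1)` is not uniformly distributed; in fact the
set of indices `k` with `α_k + kτω ∈ ℤ` has positive lower density. -/
theorem stmt_2 (ω : ℝ) (hω : Irrational ω) :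
    ∃ β : ℕ → ℝ, ∀ τ : ℕ, 0 < τ →
      (¬ ∀ F : C(UnitAddCircle, ℝ),
          Tendsto
            (fun N : ℕ => (1 / (N : ℝ)) * ∑ k ∈ Finset.Icc 1 N,
              F ((((∑ j ∈ Finset.Icc 1 k, β j) + (k : ℝ) * (τ : ℝ) * ω : ℝ)) : UnitAddCircle))
            atTop (nhds (∫ y, F y))) ∧
      0 < liminf
          (fun N : ℕ =>
            (((Finset.Icc 1 N).filter
                (fun k => ∃ m : ℤ, (∑ j ∈ Finset.Icc 1 k, β j) + (k : ℝ) * (τ : ℝ) * ω = m)).card : ℝ)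
              / (N : ℝ))
          atTop := by
  refine ⟨myB ω, fun τ hτ => ?_⟩
  obtain ⟨t, rfl⟩ : ∃ t, τ = t + 1 := ⟨τ - 1, by omega⟩
  set τ := t + 1 with hτdef
  -- the predicate characterization
  have hpred : ∀ k : ℕ, 1 ≤ k →
      ((∃ m : ℤ, (∑ j ∈ Finset.Icc 1 k, myB ω j) + (k : ℝ) * (τ : ℝ) * ω = m) ↔
        padicValNat 2 k = t) := by
    intro k hk
    rw [sum_myB]
    set v : ℕ := padicValNat 2 k with hv
    have hexpr : myA ω k + (k : ℝ) * (τ : ℝ) * ω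
        = (((k : ℤ) * ((τ : ℤ) - ((v : ℤ) + 1)) : ℤ) : ℝ) * ω := by
      simp only [myA]; push_cast; ring
    constructor
    · rintro ⟨m, hm⟩
      by_contra hne
      have hn0 : ((k : ℤ) * ((τ : ℤ) - ((v : ℤ) + 1)) : ℤ) ≠ 0 := by
        have : (τ : ℤ) - ((v : ℤ) + 1) ≠ 0 := by
          simp only [hτdef]; push_cast; omega
        have hk0 : (k:ℤ) ≠ 0 := by exact_mod_cast (by omega : k ≠ 0)
        exact mul_ne_zero hk0 this
      rw [hexpr] at hm
      exact (hω.intCast_mul hn0).ne_int m hm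
    · intro h
      refine ⟨0, ?_⟩
      rw [hexpr, h]
      push_cast [hτdef]
      ring
  -- rewrite the filtered set
  have hfilter : ∀ N : ℕ,
      (Finset.Icc 1 N).filter
        (fun k => ∃ m : ℤ, (∑ j ∈ Finset.Icc 1 k, myB ω j) + (k : ℝ) * (τ : ℝ) * ω = m)
      = (Finset.Icc 1 N).filter (fun k => padicValNat 2 k = t) := by
    intro N
    apply Finset.filter_congr
    intro k hk
    simp only [Finset.mem_Icc] at hk
    simpa using hpred k hk.1
  set u : ℕ → ℝ := fun N =>
      (((Finset.Icc 1 N).filter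
          (fun k => ∃ m : ℤ, (∑ j ∈ Finset.Icc 1 k, myB ω j) + (k : ℝ) * (τ : ℝ) * ω = m)).card : ℝ)
        / (N : ℝ) with hu
  set δ : ℝ := ((2:ℝ)^(τ+1))⁻¹ with hδ
  have hδpos : 0 < δ := by positivity
  -- eventual lower bound on u
  have hev : ∀ᶠ N in atTop, δ ≤ u N := by
    filter_upwards [eventually_ge_atTop (2^(τ+1))] with N hN
    have hN0 : (0:ℝ) < (N:ℝ) := by
      have : 0 < N := lt_of_lt_of_le (by positivity) hN
      exact_mod_cast this
    have h1 : ((N / 2^τ : ℕ) : ℝ) ≤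
        (((Finset.Icc 1 N).filter (fun k => padicValNat 2 k = t)).card : ℝ) := by
      exact_mod_cast count_padic t N
    have h2 : (N : ℝ) < ((N / 2^τ : ℕ) : ℝ) * 2^τ + 2^τ := by
      have := Nat.lt_div_mul_add (a := N) (show 0 < 2^τ by positivity)
      exact_mod_cast this
    have h3 : (2:ℝ)^(τ+1) ≤ (N:ℝ) := by exact_mod_cast hN
    rw [hu]
    simp only [hfilter]
    rw [le_div_iff₀ hN0]
    have hp : (0:ℝ) < 2^τ := by positivity
    have hps : (2:ℝ)^(τ+1) = 2^τ * 2 := pow_succ 2 τ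
    rw [hδ, hps]
    rw [inv_mul_le_iff₀ (by positivity)]
    nlinarith [h1, h2, h3, hp]
  -- u is bounded above by 1
  have hub : ∀ N, u N ≤ 1 := by
    intro N
    rcases Nat.eq_zero_or_pos N with h | h
    · simp [hu, h]
    · rw [hu]
      have hc : (((Finset.Icc 1 N).filter
          (fun k => ∃ m : ℤ, (∑ j ∈ Finset.Icc 1 k, myB ω j) + (k : ℝ) * (τ : ℝ) * ω = m)).card) ≤ N := by
        calc _ ≤ (Finset.Icc 1 N).card := Finset.card_filter_le _ _
        _ = N := by rw [Nat.card_Icc]; omega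
      rw [div_le_one (by exact_mod_cast h)]
      exact_mod_cast hc
  have hunn : ∀ N, 0 ≤ u N := fun N => by positivity
  have hcb : IsCoboundedUnder (· ≥ ·) atTop u :=
    (isBoundedUnder_of ⟨1, fun N => hub N⟩).isCoboundedUnder_ge
  have hliminf : δ ≤ liminf u atTop := le_liminf_of_le hcb hev
  refine ⟨?_, lt_of_lt_of_le hδpos hliminf⟩
  -- non uniform distribution
  intro hUD
  set c : ℝ := (2:ℝ)^(τ+3) with hc
  have hcpos : (0:ℝ) < c := by positivity
  set F : C(UnitAddCircle, ℝ) := ⟨fun x => max 0 (1 - c * ‖x‖), by fun_prop⟩ with hF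
  have hFnn : ∀ x, 0 ≤ F x := fun x => le_max_left _ _
  have hF0 : F 0 = 1 := by simp [hF]
  have hFle : ∀ x, F x ≤ Set.indicator (Metric.closedBall (0:UnitAddCircle) c⁻¹) (fun _ => (1:ℝ)) x := by
    intro x
    by_cases hx : x ∈ Metric.closedBall (0:UnitAddCircle) c⁻¹
    · rw [Set.indicator_of_mem hx]
      simp only [hF, ContinuousMap.coe_mk]
      apply max_le (by norm_num)
      nlinarith [mul_nonneg hcpos.le (norm_nonneg x)]
    · rw [Set.indicator_of_notMem hx]
      simp only [Metric.mem_closedBall, dist_zero_right, not_le] at hx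
      simp only [hF, ContinuousMap.coe_mk]
      apply max_le le_rfl
      nlinarith [mul_lt_mul_of_pos_left hx hcpos, mul_inv_cancel₀ (ne_of_gt hcpos)]
  have hFint : Integrable F :=
    F.continuous.integrable_of_hasCompactSupport (HasCompactSupport.of_compactSpace _)
  have hIub : ∫ y, F y ≤ 2 * c⁻¹ := by
    have hii : Integrable (Set.indicator (Metric.closedBall (0:UnitAddCircle) c⁻¹) (fun _ => (1:ℝ))) :=
      (integrable_const 1).indicator Metric.isClosed_closedBall.measurableSet
    calc ∫ y, F y ≤ ∫ y, Set.indicator (Metric.closedBall (0:UnitAddCircle) c⁻¹) (fun _ => (1:ℝ)) y :=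
          integral_mono hFint hii hFle
      _ = (volume (Metric.closedBall (0:UnitAddCircle) c⁻¹)).toReal • (1:ℝ) := by
          rw [integral_indicator_const _ Metric.isClosed_closedBall.measurableSet]; rfl
      _ ≤ 2 * c⁻¹ := by
          rw [AddCircle.volume_closedBall, smul_eq_mul, mul_one]
          rw [ENNReal.toReal_ofReal (by positivity : (0:ℝ) ≤ min 1 (2 * c⁻¹))]
          exact min_le_right _ _
  have hIlt : ∫ y, F y < δ := by
    apply lt_of_le_of_lt hIub
    rw [hδ, hc]
    rw [show (2:ℝ) * ((2:ℝ)^(τ+3))⁻¹ = ((2:ℝ)^(τ+2))⁻¹ by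
      rw [pow_succ, pow_succ, pow_succ]; field_simp]
    apply inv_strictAnti₀ (by positivity)
    apply pow_lt_pow_right₀ (by norm_num)
    omega
  set a : ℕ → ℝ := fun N => (1 / (N : ℝ)) * ∑ k ∈ Finset.Icc 1 N,
      F ((((∑ j ∈ Finset.Icc 1 k, myB ω j) + (k : ℝ) * (τ : ℝ) * ω : ℝ)) : UnitAddCircle) with ha
  have hua : ∀ N, u N ≤ a N := by
    intro N
    simp only [hu, ha]
    set S := (Finset.Icc 1 N).filter
        (fun k => ∃ m : ℤ, (∑ j ∈ Finset.Icc 1 k, myB ω j) + (k : ℝ) * (τ : ℝ) * ω = m) with hS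
    have hcard : (S.card : ℝ) ≤ ∑ k ∈ Finset.Icc 1 N,
        F ((((∑ j ∈ Finset.Icc 1 k, myB ω j) + (k : ℝ) * (τ : ℝ) * ω : ℝ)) : UnitAddCircle) := by
      have h1 : (S.card : ℝ) = ∑ k ∈ S, (1:ℝ) := by simp
      rw [h1]
      calc ∑ k ∈ S, (1:ℝ)
          ≤ ∑ k ∈ S, F ((((∑ j ∈ Finset.Icc 1 k, myB ω j) + (k : ℝ) * (τ : ℝ) * ω : ℝ)) : UnitAddCircle) := by
            apply Finset.sum_le_sum
            intro k hk
            rw [hS, Finset.mem_filter] at hk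
            obtain ⟨m, hm⟩ := hk.2
            rw [hm]
            have : (((m:ℝ)) : UnitAddCircle) = 0 := by
              rw [AddCircle.coe_eq_zero_iff]
              exact ⟨m, by simp⟩
            rw [this, hF0]
        _ ≤ _ := by
            apply Finset.sum_le_sum_of_subset_of_nonneg (Finset.filter_subset _ _)
            intro k _ _
            exact hFnn _
    rw [div_eq_mul_inv, one_div, mul_comm ((N:ℝ)⁻¹)]
    exact mul_le_mul_of_nonneg_right hcard (by positivity)
  have hbnd : IsBoundedUnder (· ≥ ·) atTop u := isBoundedUnder_of ⟨0, fun N => hunn N⟩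
  have hacb : IsCoboundedUnder (· ≥ ·) atTop a :=
    (hUD F).isBoundedUnder_le.isCoboundedUnder_ge
  have h1 : liminf u atTop ≤ liminf a atTop :=
    liminf_le_liminf (Eventually.of_forall hua) hbnd hacb
  have h2 : liminf a atTop = ∫ y, F y := (hUD F).liminf_eq
  linarith [hliminf, h1, h2.le, hIlt]
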